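/- Let k be a subring of ℂ containing 2cos(2π/m) and 1/m for some integer m ≥ 3. Then for every integer a not divisible by m/2 (i.e., 2a not divisible by m), the element 4cos(aπ/m)² is a unit in k. -/

import Mathlib

open Real

open Polynomial Finset in
private lemma prod_one_add_pow (m : ℕ) (hm : 3 ≤ m) {ω : ℂ} (hω : IsPrimitiveRoot ω m) :
    ∏ j ∈ (Finset.range m).filter (fun j => j ≠ 0 ∧ 2 * j ≠ m), (1 + ω ^ j) =
      if m % 2 = 1 then 1 else ((m / 2 : ℕ) : ℂ) := by
  have hm0 : m ≠ 0 := by omega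
  have hP : (X ^ m - C 1 : ℂ[X]) = ∏ i ∈ Finset.range m, (X - C (ω ^ i)) := by
    simpa using X_pow_sub_C_eq_prod hω (by omega) (one_pow m)
  rcases Nat.even_or_odd m with he | ho
  · -- even case
    obtain ⟨t, ht⟩ := he
    have hmt : m = 2 * t := by omega
    have hSeq : (Finset.range m).filter (fun j => j ≠ 0 ∧ 2 * j ≠ m) =
        ((Finset.range m).erase 0).erase t := by
      ext j
      simp only [Finset.mem_filter, Finset.mem_erase, Finset.mem_range]
      omega
    have hhalf : ω ^ t = -1 := by
      have h2 : IsPrimitiveRoot (ω ^ t) 2 := hω.pow (by omega) (by omega)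
      exact h2.eq_neg_one_of_two_right
    -- polynomial identity
    have hmem1 : t ∈ (Finset.range m).erase 0 := by
      simp only [Finset.mem_erase, Finset.mem_range]; omega
    have hmem0 : 0 ∈ Finset.range m := by simp; omega
    have hsplit : (X - C (1:ℂ)) * ((X + 1) * ∏ j ∈ ((Finset.range m).erase 0).erase t,
        (X - C (ω ^ j))) = X ^ m - C 1 := by
      rw [hP, ← Finset.mul_prod_erase _ _ hmem0, pow_zero]
      congr 1
      rw [← Finset.mul_prod_erase _ _ hmem1, hhalf]
      congr 1
      simp [sub_eq_add_neg]
    have hgeo : (X - C (1:ℂ)) * ((X + 1) * ∑ i ∈ Finset.range t, (X ^ 2) ^ i) =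
        X ^ m - C 1 := by
      have h := geom_sum_mul (X ^ 2 : ℂ[X]) t
      rw [← pow_mul, ← hmt] at h
      rw [C_1, ← h]; ring
    have hX1 : (X - C (1:ℂ)) ≠ 0 := X_sub_C_ne_zero 1
    have hX2 : (X + 1 : ℂ[X]) ≠ 0 := by
      have : (X + 1 : ℂ[X]) = X - C (-1) := by simp [sub_eq_add_neg]
      rw [this]; exact X_sub_C_ne_zero (-1)
    have hcancel : ∏ j ∈ ((Finset.range m).erase 0).erase t, (X - C (ω ^ j)) =
        ∑ i ∈ Finset.range t, ((X : ℂ[X]) ^ 2) ^ i := by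
      have h1 := hsplit.trans hgeo.symm
      exact mul_left_cancel₀ hX2 (mul_left_cancel₀ hX1 h1)
    -- evaluate at -1
    have heval := congrArg (Polynomial.eval (-1 : ℂ)) hcancel
    simp only [eval_prod, eval_sub, eval_X, eval_C, eval_finset_sum, eval_pow, eval_ofNat] at heval
    have heval' : ∏ j ∈ ((Finset.range m).erase 0).erase t, ((-1 : ℂ) - ω ^ j) = (t : ℂ) := by
      rw [heval]
      norm_num
    -- relate products
    have hcard : (((Finset.range m).erase 0).erase t).card = m - 2 := by
      rw [Finset.card_erase_of_mem hmem1, Finset.card_erase_of_mem hmem0, Finset.card_range]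
      omega
    have hprodneg : ∏ j ∈ ((Finset.range m).erase 0).erase t, (1 + ω ^ j) =
        (-1 : ℂ) ^ (m - 2) * ∏ j ∈ ((Finset.range m).erase 0).erase t, ((-1 : ℂ) - ω ^ j) := by
      rw [← hcard, ← Finset.prod_const, ← Finset.prod_mul_distrib]
      apply Finset.prod_congr rfl
      intro j _; ring
    rw [hSeq, hprodneg, heval']
    have : (-1 : ℂ) ^ (m - 2) = 1 := Even.neg_one_pow ⟨t - 1, by omega⟩
    rw [this, one_mul, if_neg (show ¬ m % 2 = 1 by omega)]
    have htm : m / 2 = t := by omega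
    rw [htm]
  · -- odd case
    have hSeq : (Finset.range m).filter (fun j => j ≠ 0 ∧ 2 * j ≠ m) =
        (Finset.range m).erase 0 := by
      ext j
      simp only [Finset.mem_filter, Finset.mem_erase, Finset.mem_range]
      rcases ho with ⟨t, ht⟩
      omega
    have hmem0 : 0 ∈ Finset.range m := by simp; omega
    have hsplit : (X - C (1:ℂ)) * ∏ j ∈ (Finset.range m).erase 0, (X - C (ω ^ j)) =
        X ^ m - C 1 := by
      rw [hP, ← Finset.mul_prod_erase _ _ hmem0, pow_zero]
    have hgeo : (X - C (1:ℂ)) * ∑ i ∈ Finset.range m, X ^ i = X ^ m - C 1 := by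
      have h := geom_sum_mul (X : ℂ[X]) m
      rw [C_1, ← h]; ring
    have hX1 : (X - C (1:ℂ)) ≠ 0 := X_sub_C_ne_zero 1
    have hcancel : ∏ j ∈ (Finset.range m).erase 0, (X - C (ω ^ j)) =
        ∑ i ∈ Finset.range m, (X : ℂ[X]) ^ i :=
      mul_left_cancel₀ hX1 (hsplit.trans hgeo.symm)
    have heval := congrArg (Polynomial.eval (-1 : ℂ)) hcancel
    simp only [eval_prod, eval_sub, eval_X, eval_C, eval_finset_sum, eval_pow] at heval
    have hgs : ∑ i ∈ Finset.range m, (-1 : ℂ) ^ i = 1 := by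
      rw [neg_one_geom_sum, if_neg]
      rcases ho with ⟨t, ht⟩
      simp [Nat.even_iff]; omega
    have heval' : ∏ j ∈ (Finset.range m).erase 0, ((-1 : ℂ) - ω ^ j) = 1 := heval.trans hgs
    have hcard : ((Finset.range m).erase 0).card = m - 1 := by
      rw [Finset.card_erase_of_mem hmem0, Finset.card_range]
    have hprodneg : ∏ j ∈ (Finset.range m).erase 0, (1 + ω ^ j) =
        (-1 : ℂ) ^ (m - 1) * ∏ j ∈ (Finset.range m).erase 0, ((-1 : ℂ) - ω ^ j) := by
      rw [← hcard, ← Finset.prod_const, ← Finset.prod_mul_distrib]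
      apply Finset.prod_congr rfl
      intro j _; ring
    rw [hSeq, hprodneg, heval']
    have : (-1 : ℂ) ^ (m - 1) = 1 := by
      apply Even.neg_one_pow
      rcases ho with ⟨t, ht⟩; exact ⟨t, by omega⟩
    rw [this, one_mul, if_pos (Nat.odd_iff.mp ho)]

private lemma pow_add_inv_mem (k : Subring ℂ) {ω : ℂ} (hω : ω ≠ 0) (h : ω + ω⁻¹ ∈ k) (j : ℕ) :
    ω ^ j + (ω ^ j)⁻¹ ∈ k := by
  have h1 : (Polynomial.dickson 1 (1 : ℂ) j).eval (ω + ω⁻¹) = ω ^ j + (ω ^ j)⁻¹ := by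
    rw [Polynomial.dickson_one_one_eval_add_inv ω ω⁻¹ (mul_inv_cancel₀ hω) j, inv_pow]
  set t : k := ⟨ω + ω⁻¹, h⟩ with htdef
  have h2 : (Polynomial.dickson 1 (1 : ℂ) j).eval (ω + ω⁻¹) =
      (((Polynomial.dickson 1 (1 : k) j).eval t : k) : ℂ) := by
    have h3 := Polynomial.eval₂_at_apply (p := Polynomial.dickson 1 (1 : k) j) k.subtype t
    rw [← Polynomial.eval_map, Polynomial.map_dickson, map_one] at h3
    exact h3
  rw [← h1, h2]
  exact SetLike.coe_mem _

theorem four_cos_sq_unit (m : ℕ) (hm : 3 ≤ m) (k : Subring ℂ)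
    (hcos : ((2 * Real.cos (2 * Real.pi / m) : ℝ) : ℂ) ∈ k)
    (hinv : ((m : ℂ))⁻¹ ∈ k) (a : ℤ) (ha : ¬ ((m : ℤ) ∣ 2 * a)) :
    ((4 * Real.cos (a * Real.pi / m) ^ 2 : ℝ) : ℂ) ∈ k ∧
    ∃ y ∈ k, ((4 * Real.cos (a * Real.pi / m) ^ 2 : ℝ) : ℂ) * y = 1 := by
  have hm0 : m ≠ 0 := by omega
  have hmC : (m : ℂ) ≠ 0 := Nat.cast_ne_zero.mpr hm0
  set ω : ℂ := Complex.exp (2 * Real.pi * Complex.I / m) with hωdef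
  have hω : IsPrimitiveRoot ω m := Complex.isPrimitiveRoot_exp m hm0
  have hωne : ω ≠ 0 := Complex.exp_ne_zero _
  -- 2cos(2π/m) = ω + ω⁻¹
  have ht : ((2 * Real.cos (2 * Real.pi / m) : ℝ) : ℂ) = ω + ω⁻¹ := by
    have h1 : ((2 * Real.cos (2 * Real.pi / m) : ℝ) : ℂ) =
        2 * Complex.cos (((2 * Real.pi / m : ℝ) : ℂ)) := by
      push_cast [Complex.ofReal_cos]; ring
    have e1 : (((2 * Real.pi / m : ℝ)) : ℂ) * Complex.I = 2 * ↑Real.pi * Complex.I / ↑m := by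
      push_cast; ring
    have e2 : -(((2 * Real.pi / m : ℝ)) : ℂ) * Complex.I = -(2 * ↑Real.pi * Complex.I / ↑m) := by
      push_cast; ring
    rw [h1, Complex.two_cos, e1, e2, hωdef, ← Complex.exp_neg]
  have hmemωinv : ω + ω⁻¹ ∈ k := ht ▸ hcos
  -- the element
  set j₀ : ℕ := (a % m).toNat with hj₀def
  have hamod : (0 : ℤ) ≤ a % m := Int.emod_nonneg a (by exact_mod_cast hm0)
  have hamodlt : a % m < m := Int.emod_lt_of_pos a (by exact_mod_cast Nat.pos_of_ne_zero hm0)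
  have hj₀cast : (j₀ : ℤ) = a % m := Int.toNat_of_nonneg hamod
  have hj₀lt : j₀ < m := by omega
  have hzpow : ω ^ (a : ℤ) = ω ^ j₀ := by
    have h1 : ω ^ (a : ℤ) = ω ^ (a % m : ℤ) := by
      conv_lhs => rw [← Int.emod_add_mul_ediv a m]
      rw [zpow_add₀ hωne, zpow_mul]
      norm_cast
      rw [hω.pow_eq_one, one_zpow, mul_one]
    rw [h1, ← hj₀cast, zpow_natCast]
  have hc : ((4 * Real.cos (a * Real.pi / m) ^ 2 : ℝ) : ℂ) = 2 + (ω ^ j₀ + (ω ^ j₀)⁻¹) := by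
    have hreal : (4 * Real.cos (a * Real.pi / m) ^ 2 : ℝ) =
        2 + 2 * Real.cos (2 * (a * Real.pi / m)) := by
      have := Real.cos_sq (a * Real.pi / m)
      linarith
    rw [hreal]
    have h1 : ((2 + 2 * Real.cos (2 * (a * Real.pi / m)) : ℝ) : ℂ) =
        2 + 2 * Complex.cos (((2 * (a * Real.pi / m) : ℝ) : ℂ)) := by
      push_cast [Complex.ofReal_cos]; ring
    have e1 : (((2 * (a * Real.pi / m) : ℝ)) : ℂ) * Complex.I =
        (a : ℂ) * (2 * ↑Real.pi * Complex.I / ↑m) := by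
      push_cast; ring
    have e2 : -(((2 * (a * Real.pi / m) : ℝ)) : ℂ) * Complex.I =
        -((a : ℂ) * (2 * ↑Real.pi * Complex.I / ↑m)) := by
      push_cast; ring
    have e3 : Complex.exp ((a : ℂ) * (2 * ↑Real.pi * Complex.I / ↑m)) = ω ^ j₀ := by
      have h4 := Complex.exp_int_mul (2 * ↑Real.pi * Complex.I / ↑m) a
      rw [h4, ← hωdef, hzpow]
    rw [h1, Complex.two_cos, e1, e2, Complex.exp_neg, e3]
  -- j₀ is a valid index
  have hj₀ : j₀ ≠ 0 ∧ 2 * j₀ ≠ m := by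
    constructor
    · intro h0
      apply ha
      have : a % m = 0 := by omega
      have hdvd : (m : ℤ) ∣ a := Int.dvd_of_emod_eq_zero this
      exact Dvd.dvd.mul_left hdvd 2
    · intro h0
      apply ha
      have h1 : (m : ℤ) ∣ 2 * (a % m) := by
        have hcast : (2 * (a % m) : ℤ) = ((2 * j₀ : ℕ) : ℤ) := by
          rw [← hj₀cast]; push_cast; ring
        rw [hcast, h0]
      have h2 : (m : ℤ) ∣ 2 * (a % m) - 2 * a :=
        ⟨-(2 * (a / m)), by rw [Int.emod_def]; ring⟩
      have := dvd_sub h1 h2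
      simpa using this
  classical
  set S : Finset ℕ := (Finset.range m).filter (fun j => j ≠ 0 ∧ 2 * j ≠ m) with hSdef
  have hj₀S : j₀ ∈ S := by
    rw [hSdef]; simp only [Finset.mem_filter, Finset.mem_range]
    exact ⟨hj₀lt, hj₀⟩
  -- each factor lies in k
  have h2k : (2 : ℂ) ∈ k := by
    have h := k.add_mem k.one_mem k.one_mem
    norm_num at h
    simp
  have hfmem : ∀ j : ℕ, (2 + (ω ^ j + (ω ^ j)⁻¹) : ℂ) ∈ k := fun j =>
    k.add_mem h2k (pow_add_inv_mem k hωne hmemωinv j)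
  -- product over S
  have hfprod : ∏ j ∈ S, (2 + (ω ^ j + (ω ^ j)⁻¹)) =
      (if m % 2 = 1 then 1 else ((m / 2 : ℕ) : ℂ)) ^ 2 := by
    have h1 : ∀ j ∈ S, (2 + (ω ^ j + (ω ^ j)⁻¹) : ℂ) = (1 + ω ^ j) * (1 + (ω ^ j)⁻¹) := by
      intro j _
      have hne : (ω ^ j : ℂ) ≠ 0 := pow_ne_zero _ hωne
      field_simp
      ring
    rw [Finset.prod_congr rfl h1, Finset.prod_mul_distrib]
    have h2 : ∏ j ∈ S, (1 + (ω ^ j)⁻¹) = ∏ j ∈ S, (1 + ω ^ j) := by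
      apply Finset.prod_nbij' (fun j => m - j) (fun j => m - j)
      · intro j hj
        rw [hSdef] at hj ⊢
        simp only [Finset.mem_filter, Finset.mem_range] at hj ⊢
        omega
      · intro j hj
        rw [hSdef] at hj ⊢
        simp only [Finset.mem_filter, Finset.mem_range] at hj ⊢
        omega
      · intro j hj
        rw [hSdef] at hj
        simp only [Finset.mem_filter, Finset.mem_range] at hj
        omega
      · intro j hj
        rw [hSdef] at hj
        simp only [Finset.mem_filter, Finset.mem_range] at hj
        omega
      · intro j hj
        rw [hSdef] at hj
        simp only [Finset.mem_filter, Finset.mem_range] at hj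
        have : ω ^ (m - j) = (ω ^ j)⁻¹ := by
          have h3 : ω ^ (m - j) * ω ^ j = 1 := by
            rw [← pow_add]
            have : m - j + j = m := by omega
            rw [this, hω.pow_eq_one]
          exact eq_inv_of_mul_eq_one_left h3
        rw [this]
    rw [h2, prod_one_add_pow m hm hω, sq]
  constructor
  · rw [hc]; exact hfmem j₀
  · -- the inverse
    have hP : ∏ j ∈ S.erase j₀, (2 + (ω ^ j + (ω ^ j)⁻¹)) ∈ k :=
      Subring.prod_mem k (fun j _ => hfmem j)
    have hsplit : (2 + (ω ^ j₀ + (ω ^ j₀)⁻¹)) * ∏ j ∈ S.erase j₀, (2 + (ω ^ j + (ω ^ j)⁻¹)) =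
        (if m % 2 = 1 then 1 else ((m / 2 : ℕ) : ℂ)) ^ 2 :=
      (Finset.mul_prod_erase S (fun j => 2 + (ω ^ j + (ω ^ j)⁻¹)) hj₀S).trans hfprod
    rcases Nat.even_or_odd m with he | ho
    · -- even: multiply by (2/m)^2
      refine ⟨(∏ j ∈ S.erase j₀, (2 + (ω ^ j + (ω ^ j)⁻¹))) * (2 * (m : ℂ)⁻¹) ^ 2, ?_, ?_⟩
      · exact k.mul_mem hP (k.pow_mem (k.mul_mem h2k hinv) 2)
      · rw [hc, ← mul_assoc, hsplit, if_neg (by rcases he with ⟨t, ht⟩; omega)]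
        have hhalf : ((m / 2 : ℕ) : ℂ) = (m : ℂ) / 2 := by
          rcases he with ⟨t, ht⟩
          have : m / 2 = t := by omega
          rw [this]; push_cast [ht]; ring
        rw [hhalf]
        field_simp
    · refine ⟨∏ j ∈ S.erase j₀, (2 + (ω ^ j + (ω ^ j)⁻¹)), hP, ?_⟩
      rw [hc, hsplit, if_pos (Nat.odd_iff.mp ho), one_pow]
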